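/- (Backtracking sum estimate.) Let d ≥ 2, v ∈ ℝ^d with v ≠ 0, γ = 3/|v|, b > 0, and let ℓ' be a unit vector with v·ℓ' > 0. Set V_{ℓ',b,L} = {x : −bL < x·ℓ' < L, |Π_{ℓ'}(x)| < L²} and V⁻ = {x ∈ V_{ℓ',b,L} : x·ℓ' < −bL/2}. Then: (i) for every integer n ≥ 1 and every y ∈ V⁻, |y − nv| ≥ bL/2; and (ii) for every c₂ > 0 there is a constant c depending only on b, d, c₂, |v| such that for all L ≥ 1: Σ_{n=1}^{⌊γL⌋} ∫_{V⁻} c₂ n^{−d/2} exp(−|y − nv|²/(c₂ n)) dy ≤ c L^{2d} exp(−b²L/(4 c₂ γ)). -/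

import Mathlib

open MeasureTheory Set
open scoped RealInnerProductSpace

noncomputable section

abbrev EucSp (d : ℕ) : Type := EuclideanSpace ℝ (Fin d)

/-- the bounded approximation `V_{ℓ',b,L}` of the slab, with cylinder radius `ρ`. -/
def cyl {d : ℕ} (ℓ' : EucSp d) (b L ρ : ℝ) : Set (EucSp d) :=
  {x | -(b * L) < ⟪x, ℓ'⟫ ∧ ⟪x, ℓ'⟫ < L ∧ ‖x - ⟪x, ℓ'⟫ • ℓ'‖ < ρ}

/-- the backtracked part `V⁻` of `V_{ℓ',b,L}`. -/
def Vminus {d : ℕ} (ℓ' : EucSp d) (b L : ℝ) : Set (EucSp d) :=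
  {x ∈ cyl ℓ' b L (L ^ 2) | ⟪x, ℓ'⟫ < -(b * L) / 2}

/-- Volume bound for the cylinder: it fits in a box of side `L + bL` times `(2ρ)^(d-1)`. -/
lemma volume_cyl_le {d : ℕ} (ℓ' : EucSp d) (hℓ : ‖ℓ'‖ = 1) (b L ρ : ℝ)
    (hbL : 0 ≤ b * L) (hL : 0 ≤ L) (hρ : 0 ≤ ρ) :
    volume (cyl ℓ' b L ρ) ≤ ENNReal.ofReal ((L + b * L) * (2 * ρ) ^ (d - 1)) := by
  classical
  have horth : Orthonormal ℝ ((↑) : ({ℓ'} : Set (EucSp d)) → EucSp d) := by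
    rw [orthonormal_subtype_iff_ite]
    intro v hv w hw
    simp only [mem_singleton_iff] at hv hw
    subst hv; subst hw
    rw [if_pos rfl, real_inner_self_eq_norm_sq, hℓ]
    norm_num
  obtain ⟨u, bas, hsub, hcoe⟩ := horth.exists_orthonormalBasis_extension
  have hmem : ℓ' ∈ u := hsub rfl
  set i₀ : ↥u := ⟨ℓ', hmem⟩ with hi₀
  have hcard : Fintype.card ↥u = d := by
    have h1 : Module.finrank ℝ (EucSp d) = u.card :=
      Module.finrank_eq_card_finset_basis bas.toBasis
    rw [finrank_euclideanSpace_fin] at h1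
    rw [Fintype.card_coe, ← h1]
  set F : ↥u → Set ℝ := fun i => if i = i₀ then Icc (-(b * L)) L else Icc (-ρ) ρ with hF
  have hFm : MeasurableSet (Set.univ.pi F) :=
    MeasurableSet.univ_pi fun i => by by_cases h : i = i₀ <;> simp [hF, h]
  set e := (MeasurableEquiv.toLp 2 (↥u → ℝ)).symm with he
  have hbasi₀ : bas i₀ = ℓ' := by rw [hcoe]
  -- the subset relation
  have hsubset : cyl ℓ' b L ρ ⊆ bas.repr ⁻¹' (e ⁻¹' (Set.univ.pi F)) := by
    intro x hx
    obtain ⟨hx1, hx2, hx3⟩ := hx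
    intro i _
    have hei : e (bas.repr x) i = bas.repr x i := rfl
    have hrep : bas.repr x i = ⟪bas i, x⟫ := bas.repr_apply_apply x i
    by_cases h : i = i₀
    · have hbi : bas i = ℓ' := by rw [h, hbasi₀]
      simp only [hF, if_pos h]
      rw [hei, hrep, hbi, real_inner_comm]
      exact Set.mem_Icc.mpr ⟨le_of_lt hx1, le_of_lt hx2⟩
    · simp only [hF, if_neg h]
      rw [hei, hrep]
      have h0 : ⟪bas i, ℓ'⟫ = 0 := by
        have h0' : ⟪bas i, bas i₀⟫ = 0 := bas.orthonormal.2 h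
        rwa [hbasi₀] at h0'
      have hsplit : ⟪bas i, x⟫ = ⟪bas i, x - ⟪x, ℓ'⟫ • ℓ'⟫ := by
        rw [inner_sub_right, real_inner_smul_right, h0]
        ring
      have hnorm1 : ‖bas i‖ = 1 := bas.orthonormal.1 i
      have habs : |⟪bas i, x⟫| ≤ ρ := by
        rw [hsplit]
        calc |⟪bas i, x - ⟪x, ℓ'⟫ • ℓ'⟫| ≤ ‖bas i‖ * ‖x - ⟪x, ℓ'⟫ • ℓ'‖ :=
              abs_real_inner_le_norm _ _
          _ ≤ ρ := by rw [hnorm1, one_mul]; exact le_of_lt hx3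
      exact Set.mem_Icc.mpr (abs_le.mp habs)
  calc volume (cyl ℓ' b L ρ) ≤ volume (bas.repr ⁻¹' (e ⁻¹' (Set.univ.pi F))) :=
        measure_mono hsubset
    _ = volume (e ⁻¹' (Set.univ.pi F)) :=
        bas.measurePreserving_repr.measure_preimage
          ((e.measurableSet_preimage.mpr hFm).nullMeasurableSet)
    _ = volume (Set.univ.pi F) :=
        (EuclideanSpace.volume_preserving_symm_measurableEquiv_toLp ↥u).measure_preimage_equiv _
    _ = ∏ i, volume (F i) := volume_pi_pi F
    _ = ENNReal.ofReal ((L + b * L) * (2 * ρ) ^ (d - 1)) := by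
        rw [← Finset.mul_prod_erase Finset.univ _ (Finset.mem_univ i₀)]
        have h1 : volume (F i₀) = ENNReal.ofReal (L + b * L) := by
          have hFe : F i₀ = Icc (-(b * L)) L := by simp [hF]
          rw [hFe, Real.volume_Icc, show L - -(b * L) = L + b * L by ring]
        have h2 : ∀ i ∈ Finset.univ.erase i₀, volume (F i) = ENNReal.ofReal (2 * ρ) := by
          intro i hi
          have hne : i ≠ i₀ := (Finset.mem_erase.mp hi).1
          have hFe : F i = Icc (-ρ) ρ := by simp [hF, hne]
          rw [hFe, Real.volume_Icc, show ρ - -ρ = 2 * ρ by ring]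
        rw [Finset.prod_congr rfl h2, h1, Finset.prod_const,
          Finset.card_erase_of_mem (Finset.mem_univ i₀), Finset.card_univ, hcard,
          ← ENNReal.ofReal_pow (by linarith), ← ENNReal.ofReal_mul (by linarith)]

theorem backtracking_sum_estimate (d : ℕ) (hd : 2 ≤ d) (v : EucSp d) (hv : v ≠ 0)
    (b : ℝ) (hb : 0 < b) :
    -- (i)
    (∀ ℓ' : EucSp d, ‖ℓ'‖ = 1 → 0 < ⟪v, ℓ'⟫ →
      ∀ L > (0:ℝ), ∀ n : ℕ, 1 ≤ n → ∀ y ∈ Vminus ℓ' b L,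
        b * L / 2 ≤ ‖y - (n : ℝ) • v‖) ∧
    -- (ii)
    (∀ c₂ > (0:ℝ), ∃ c > (0:ℝ),
      ∀ ℓ' : EucSp d, ‖ℓ'‖ = 1 → 0 < ⟪v, ℓ'⟫ →
      ∀ L ≥ (1:ℝ),
        ∑ n ∈ Finset.Icc 1 ⌊3 / ‖v‖ * L⌋₊,
            ∫ y in Vminus ℓ' b L,
              c₂ * (n : ℝ) ^ (-(d : ℝ) / 2) *
                Real.exp (-‖y - (n : ℝ) • v‖ ^ 2 / (c₂ * n)) ≤
          c * L ^ (2 * (d : ℝ)) * Real.exp (-(b ^ 2 * L) / (4 * c₂ * (3 / ‖v‖)))) := by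
  have hvnorm : 0 < ‖v‖ := norm_pos_iff.mpr hv
  -- part (i)
  have part1 : ∀ ℓ' : EucSp d, ‖ℓ'‖ = 1 → 0 < ⟪v, ℓ'⟫ →
      ∀ L > (0:ℝ), ∀ n : ℕ, 1 ≤ n → ∀ y ∈ Vminus ℓ' b L,
        b * L / 2 ≤ ‖y - (n : ℝ) • v‖ := by
    intro ℓ' hℓ hvℓ L hL n hn y hy
    obtain ⟨hycyl, hylt⟩ := hy
    have h1 : ⟪y - (n : ℝ) • v, ℓ'⟫ = ⟪y, ℓ'⟫ - (n : ℝ) * ⟪v, ℓ'⟫ := by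
      rw [inner_sub_left, real_inner_smul_left]
    have hn1 : (1 : ℝ) ≤ (n : ℝ) := by exact_mod_cast hn
    have h2 : ⟪y - (n : ℝ) • v, ℓ'⟫ < -(b * L) / 2 := by
      rw [h1]; nlinarith
    have h3 : |⟪y - (n : ℝ) • v, ℓ'⟫| ≤ ‖y - (n : ℝ) • v‖ := by
      have := abs_real_inner_le_norm (y - (n : ℝ) • v) ℓ'
      rwa [hℓ, mul_one] at this
    have h4 : b * L / 2 ≤ |⟪y - (n : ℝ) • v, ℓ'⟫| := by
      rw [abs_of_neg (by nlinarith)]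
      nlinarith
    linarith
  refine ⟨part1, ?_⟩
  intro c₂ hc₂
  obtain ⟨k, hk⟩ := Nat.exists_eq_add_of_le hd
  set γ : ℝ := 3 / ‖v‖ with hγdef
  have hγ : 0 < γ := by positivity
  refine ⟨γ * c₂ * (1 + b) * 2 ^ (d - 1), by positivity, ?_⟩
  intro ℓ' hℓ hvℓ L hL
  have hL0 : (0 : ℝ) < L := by linarith
  set E : ℝ := Real.exp (-(b ^ 2 * L) / (4 * c₂ * γ)) with hE
  have hE0 : 0 < E := Real.exp_pos _
  set N : ℕ := ⌊γ * L⌋₊ with hN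
  have hNle : (N : ℝ) ≤ γ * L := Nat.floor_le (by positivity)
  -- volume bound
  have hvolle : volume (Vminus ℓ' b L) ≤ ENNReal.ofReal ((L + b * L) * (2 * L ^ 2) ^ (d - 1)) := by
    refine le_trans (measure_mono fun x hx => hx.1) ?_
    exact volume_cyl_le ℓ' hℓ b L (L ^ 2) (by positivity) (le_of_lt hL0) (by positivity)
  have hvolfin : volume (Vminus ℓ' b L) < ⊤ := lt_of_le_of_lt hvolle ENNReal.ofReal_lt_top
  have hvolreal : (volume (Vminus ℓ' b L)).toReal ≤ (L + b * L) * (2 * L ^ 2) ^ (d - 1) :=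
    ENNReal.toReal_le_of_le_ofReal (by positivity) hvolle
  -- per-term bound
  have hterm : ∀ n ∈ Finset.Icc 1 N,
      (∫ y in Vminus ℓ' b L,
        c₂ * (n : ℝ) ^ (-(d : ℝ) / 2) * Real.exp (-‖y - (n : ℝ) • v‖ ^ 2 / (c₂ * n))) ≤
      (c₂ * E) * (volume (Vminus ℓ' b L)).toReal := by
    intro n hn
    obtain ⟨hn1, hn2⟩ := Finset.mem_Icc.mp hn
    have hn1' : (1 : ℝ) ≤ (n : ℝ) := by exact_mod_cast hn1
    have hnγL : (n : ℝ) ≤ γ * L := le_trans (by exact_mod_cast hn2) hNle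
    set f : EucSp d → ℝ := fun y =>
      c₂ * (n : ℝ) ^ (-(d : ℝ) / 2) * Real.exp (-‖y - (n : ℝ) • v‖ ^ 2 / (c₂ * n)) with hf
    have hfm : AEStronglyMeasurable f (volume.restrict (Vminus ℓ' b L)) := by
      apply Continuous.aestronglyMeasurable
      fun_prop
    have hbound : ∀ y ∈ Vminus ℓ' b L, ‖f y‖ ≤ c₂ * E := by
      intro y hy
      have hdist := part1 ℓ' hℓ hvℓ L hL0 n hn1 y hy
      have hsq : (b * L / 2) ^ 2 ≤ ‖y - (n : ℝ) • v‖ ^ 2 :=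
        pow_le_pow_left₀ (by positivity) hdist 2
      have hexp : Real.exp (-‖y - (n : ℝ) • v‖ ^ 2 / (c₂ * n)) ≤ E := by
        rw [hE]
        apply Real.exp_le_exp.mpr
        rw [div_le_div_iff₀ (by positivity) (by positivity)]
        have k1 : b ^ 2 * L * c₂ * (n : ℝ) ≤ b ^ 2 * L * c₂ * (γ * L) :=
          mul_le_mul_of_nonneg_left hnγL (by positivity)
        have k2 : 4 * c₂ * γ * ((b * L / 2) ^ 2) ≤ 4 * c₂ * γ * ‖y - (n : ℝ) • v‖ ^ 2 :=
          mul_le_mul_of_nonneg_left hsq (by positivity)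
        nlinarith [k1, k2]
      have hrpow : ((n : ℝ)) ^ (-(d : ℝ) / 2) ≤ 1 :=
        Real.rpow_le_one_of_one_le_of_nonpos hn1' (by
          have : (0:ℝ) ≤ (d:ℝ) := Nat.cast_nonneg d
          linarith)
      have hrpow0 : (0 : ℝ) ≤ ((n : ℝ)) ^ (-(d : ℝ) / 2) :=
        Real.rpow_nonneg (by positivity) _
      have hf0 : 0 ≤ f y := by positivity
      rw [Real.norm_eq_abs, abs_of_nonneg hf0, hf]
      calc c₂ * (n : ℝ) ^ (-(d : ℝ) / 2) * Real.exp (-‖y - (n : ℝ) • v‖ ^ 2 / (c₂ * n))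
          ≤ c₂ * 1 * E := by
            apply mul_le_mul _ hexp (Real.exp_nonneg _) (by positivity)
            nlinarith
        _ = c₂ * E := by ring
    calc (∫ y in Vminus ℓ' b L, f y) ≤ ‖∫ y in Vminus ℓ' b L, f y‖ := le_abs_self _
      _ ≤ (c₂ * E) * (volume (Vminus ℓ' b L)).toReal :=
          norm_setIntegral_le_of_norm_le_const hvolfin hbound
  -- sum it up
  have hsum : ∑ n ∈ Finset.Icc 1 N,
      (∫ y in Vminus ℓ' b L,
        c₂ * (n : ℝ) ^ (-(d : ℝ) / 2) * Real.exp (-‖y - (n : ℝ) • v‖ ^ 2 / (c₂ * n))) ≤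
      (N : ℝ) * ((c₂ * E) * (volume (Vminus ℓ' b L)).toReal) := by
    have := Finset.sum_le_card_nsmul _ _ _ hterm
    rwa [Nat.card_Icc, Nat.add_sub_cancel, nsmul_eq_mul] at this
  refine le_trans hsum ?_
  have hrpoweq : L ^ (2 * (d : ℝ)) = L ^ (2 * d) := by
    rw [show (2 * (d : ℝ)) = ((2 * d : ℕ) : ℝ) by push_cast; ring, Real.rpow_natCast]
  rw [hrpoweq]
  have hstep : (N : ℝ) * ((c₂ * E) * (volume (Vminus ℓ' b L)).toReal) ≤
      (γ * L) * ((c₂ * E) * ((L + b * L) * (2 * L ^ 2) ^ (d - 1))) := by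
    have hinner : (c₂ * E) * (volume (Vminus ℓ' b L)).toReal ≤
        (c₂ * E) * ((L + b * L) * (2 * L ^ 2) ^ (d - 1)) :=
      mul_le_mul_of_nonneg_left hvolreal (by positivity)
    exact mul_le_mul hNle hinner (by positivity) (by positivity)
  refine le_trans hstep (le_of_eq ?_)
  have hd1 : d - 1 = k + 1 := by omega
  have hd2 : 2 * d = 2 * k + 4 := by omega
  rw [hd1, hd2]
  ring

end
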